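/- Let Γ and G be groups, X a set, and σ : Γ × X → G, f : X → G any maps, where Γ acts on X. For every n ≥ 0 and every function ψ : G^{n+1} → ℝ (no invariance assumed), the homotopy identity holds pointwise: for all γ₀, …, γ_n ∈ Γ and all x ∈ X, s^{n+1}(σ,f)(δ^n ψ)(γ₀,…,γ_n)(x) + (δ^{n−1}(s^n(σ,f)(ψ)))(γ₀,…,γ_n)(x) = C^n(σ)(ψ)(γ₀,…,γ_n)(x) − ρ^n_n(σ,f)(ψ)(γ₀,…,γ_n)(x), with the conventions s^0(σ,f) = 0 and δ^{−1} = 0. -/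

import Mathlib

noncomputable section

/-- The homogeneous coboundary operator on `G`-cochains:
`(δ^n ψ)(g₀, …, g_{n+1}) := Σ_{i=0}^{n+1} (−1)^i ψ(g₀, …, ĝ_i, …, g_{n+1})`. -/
def coboundG {Y : Type*} (n : ℕ) (ψ : (Fin (n + 1) → Y) → ℝ)
    (g : Fin (n + 2) → Y) : ℝ :=
  ∑ i : Fin (n + 2), (-1 : ℝ) ^ (i : ℕ) * ψ fun j => g (i.succAbove j)

/-- The pullback cochain along `σ` (families of group elements indexed by `ℕ`,
only the first `n + 1` entries matter):
`C^n(σ)(ψ)(γ₀, …, γ_n)(x) := ψ(σ(γ₀⁻¹, x)⁻¹, …, σ(γ_n⁻¹, x)⁻¹)`. -/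
def pullCochain {Γ G X : Type*} [Group Γ] [Group G] (σ : Γ → X → G) (n : ℕ)
    (ψ : (Fin (n + 1) → G) → ℝ) (γ : ℕ → Γ) (x : X) : ℝ :=
  ψ fun k => (σ (γ (k : ℕ))⁻¹ x)⁻¹

/-- `ρ^n_n(σ,f)(ψ)(γ₀,…,γ_n)(x) :=
ψ(σ(γ₀⁻¹,x)⁻¹ f(γ₀⁻¹·x), …, σ(γ_n⁻¹,x)⁻¹ f(γ_n⁻¹·x))`: all entries twisted. -/
def rhoTop {Γ G X : Type*} [Group Γ] [Group G] [MulAction Γ X]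
    (σ : Γ → X → G) (f : X → G) (n : ℕ)
    (ψ : (Fin (n + 1) → G) → ℝ) (γ : ℕ → Γ) (x : X) : ℝ :=
  ψ fun k => (σ (γ (k : ℕ))⁻¹ x)⁻¹ * f ((γ (k : ℕ))⁻¹ • x)

/-- `s_i^n(σ,f)(ψ)(γ₀,…,γ_{n−1})(x)`: arguments `0, …, i` twisted by `f`, then
arguments `i, …, n−1` untwisted (the index `i` occurs twice). -/
def sTerm {Γ G X : Type*} [Group Γ] [Group G] [MulAction Γ X]
    (σ : Γ → X → G) (f : X → G) (n : ℕ) (i : ℕ)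
    (ψ : (Fin (n + 1) → G) → ℝ) (γ : ℕ → Γ) (x : X) : ℝ :=
  ψ fun k =>
    if (k : ℕ) ≤ i then (σ (γ (k : ℕ))⁻¹ x)⁻¹ * f ((γ (k : ℕ))⁻¹ • x)
    else if (k : ℕ) = i + 1 then (σ (γ i)⁻¹ x)⁻¹
    else (σ (γ ((k : ℕ) - 1))⁻¹ x)⁻¹

/-- `s^n(σ,f) := Σ_{i=0}^{n−1} (−1)^i s_i^n(σ,f)`; for `n = 0` this is the empty sum,
realizing the convention `s^0(σ,f) = 0`. -/
def sHomotopy {Γ G X : Type*} [Group Γ] [Group G] [MulAction Γ X]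
    (σ : Γ → X → G) (f : X → G) (n : ℕ)
    (ψ : (Fin (n + 1) → G) → ℝ) (γ : ℕ → Γ) (x : X) : ℝ :=
  ∑ i ∈ Finset.range n, (-1 : ℝ) ^ i * sTerm σ f n i ψ γ x

/-- The homogeneous coboundary operator with `m` terms on `Γ`-cochains:
`(δ F)(γ₀, …)(x) = Σ_{i=0}^{m−1} (−1)^i F(γ₀, …, γ̂_i, …)(x)`. Applied with
`m = n + 1` to `s^n(σ,f)(ψ)` it yields `δ^{n−1}(s^n(σ,f)(ψ))`; for `n = 0` the
summand is `s^0 = 0`, realizing the convention `δ^{−1} = 0`. -/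
def coboundCochain {Γ X : Type*} (m : ℕ) (F : (ℕ → Γ) → X → ℝ)
    (γ : ℕ → Γ) (x : X) : ℝ :=
  ∑ i ∈ Finset.range m, (-1 : ℝ) ^ i *
    F (fun k => if k < i then γ k else γ (k + 1)) x


/-! ### Auxiliary machinery -/

/-- `succAbove` on values. -/
lemma succAbove_coe_aux {m : ℕ} (j : Fin (m + 1)) (k : Fin m) :
    ((j.succAbove k : Fin (m + 1)) : ℕ)
      = if (k : ℕ) < (j : ℕ) then (k : ℕ) else (k : ℕ) + 1 := by
  rcases lt_or_ge (k : ℕ) (j : ℕ) with h | h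
  · rw [Fin.succAbove_of_castSucc_lt _ _ (by simpa [Fin.lt_def] using h)]
    simp [h]
  · rw [Fin.succAbove_of_le_castSucc _ _ (by simpa [Fin.le_def] using h)]
    simp [Nat.not_lt.mpr h]

/-- The tuple of `s^{n+1}_i(σ,f)` as a function of a natural index. -/
def Ffun {Γ G X : Type*} [Group Γ] [Group G] [MulAction Γ X]
    (σ : Γ → X → G) (f : X → G) (γ : ℕ → Γ) (x : X) (i m : ℕ) : G :=
  if m ≤ i then (σ (γ m)⁻¹ x)⁻¹ * f ((γ m)⁻¹ • x)
  else if m = i + 1 then (σ (γ i)⁻¹ x)⁻¹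
  else (σ (γ (m - 1))⁻¹ x)⁻¹


lemma abstract_homotopy (n : ℕ) (E S : ℕ → ℕ → ℝ) (W : ℕ → ℝ)
    (h1 : ∀ i j, j < i → i ≤ n → E i j = S (i - 1) j)
    (h2 : ∀ i j, i + 2 ≤ j → j ≤ n + 1 → E i j = S i (j - 1))
    (h3 : ∀ i, i ≤ n → E i i = W i)
    (h4 : ∀ i, i ≤ n → E i (i + 1) = W (i + 1)) :
    ((∑ i ∈ Finset.range (n + 1), ∑ j ∈ Finset.range (n + 2), (-1 : ℝ) ^ (i + j) * E i j)
      + ∑ q ∈ Finset.range n, ∑ p ∈ Finset.range (n + 1), (-1 : ℝ) ^ (q + p) * S q p)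
      = W 0 - W (n + 1) := by
  have key : ∀ i ∈ Finset.range (n + 1),
      ∑ j ∈ Finset.range (n + 2), (-1 : ℝ) ^ (i + j) * E i j
        = ((∑ j ∈ Finset.range i, (-1 : ℝ) ^ (i + j) * E i j)
          + (E i i - E i (i + 1)))
          + ∑ j ∈ Finset.Ico (i + 2) (n + 2), (-1 : ℝ) ^ (i + j) * E i j := by
    intro i hi
    rw [Finset.mem_range] at hi
    rw [Finset.range_eq_Ico,
      ← Finset.sum_Ico_consecutive _ (Nat.zero_le i) (by omega : i ≤ n + 2),
      Finset.sum_eq_sum_Ico_succ_bot (by omega : i < n + 2),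
      Finset.sum_eq_sum_Ico_succ_bot (by omega : i + 1 < n + 2),
      ← Finset.range_eq_Ico]
    have e1 : (-1 : ℝ) ^ (i + i) = 1 := Even.neg_one_pow ⟨i, rfl⟩
    have e2 : (-1 : ℝ) ^ (i + (i + 1)) = -1 := Odd.neg_one_pow ⟨i, by ring⟩
    rw [e1, e2]; ring
  rw [Finset.sum_congr rfl key, Finset.sum_add_distrib, Finset.sum_add_distrib]
  -- middle telescoping sum
  have hB : ∑ i ∈ Finset.range (n + 1), (E i i - E i (i + 1)) = W 0 - W (n + 1) := by
    have hcg : ∀ i ∈ Finset.range (n + 1), E i i - E i (i + 1) = W i - W (i + 1) := by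
      intro i hi
      rw [Finset.mem_range] at hi
      rw [h3 i (by omega), h4 i (by omega)]
    rw [Finset.sum_congr rfl hcg]
    exact Finset.sum_range_sub' W (n + 1)
  have hA : ∑ i ∈ Finset.range (n + 1), ∑ j ∈ Finset.range i, (-1 : ℝ) ^ (i + j) * E i j
      = -∑ q ∈ Finset.range n, ∑ p ∈ Finset.range (q + 1), (-1 : ℝ) ^ (q + p) * S q p := by
    rw [Finset.sum_range_succ']
    simp only [Finset.range_zero, Finset.sum_empty, add_zero]
    rw [← Finset.sum_neg_distrib]
    refine Finset.sum_congr rfl fun q hq => ?_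
    rw [Finset.mem_range] at hq
    rw [← Finset.sum_neg_distrib]
    refine Finset.sum_congr rfl fun p hp => ?_
    rw [Finset.mem_range] at hp
    rw [h1 (q + 1) p (by omega) (by omega)]
    have : (-1 : ℝ) ^ (q + 1 + p) = -(-1 : ℝ) ^ (q + p) := by
      rw [show q + 1 + p = (q + p) + 1 by omega, pow_succ]; ring
    simp [this]
  have hC : ∑ i ∈ Finset.range (n + 1), ∑ j ∈ Finset.Ico (i + 2) (n + 2), (-1 : ℝ) ^ (i + j) * E i j
      = -∑ q ∈ Finset.range n, ∑ p ∈ Finset.Ico (q + 1) (n + 1), (-1 : ℝ) ^ (q + p) * S q p := by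
    rw [Finset.sum_range_succ]
    rw [show Finset.Ico (n + 2) (n + 2) = ∅ by simp]
    simp only [Finset.sum_empty, add_zero]
    rw [← Finset.sum_neg_distrib]
    refine Finset.sum_congr rfl fun q hq => ?_
    rw [Finset.mem_range] at hq
    rw [Finset.sum_Ico_eq_sum_range, Finset.sum_Ico_eq_sum_range, ← Finset.sum_neg_distrib]
    rw [show n + 2 - (q + 2) = n + 1 - (q + 1) by omega]
    refine Finset.sum_congr rfl fun t ht => ?_
    rw [Finset.mem_range] at ht
    rw [h2 q (q + 2 + t) (by omega) (by omega)]
    rw [show q + 2 + t - 1 = q + 1 + t by omega]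
    have : (-1 : ℝ) ^ (q + (q + 2 + t)) = -(-1 : ℝ) ^ (q + (q + 1 + t)) := by
      rw [show q + (q + 2 + t) = (q + (q + 1 + t)) + 1 by omega, pow_succ]; ring
    simp [this]
  rw [hA, hB, hC]
  have hsplit : ∀ q ∈ Finset.range n,
      (∑ p ∈ Finset.range (q + 1), (-1 : ℝ) ^ (q + p) * S q p)
        + ∑ p ∈ Finset.Ico (q + 1) (n + 1), (-1 : ℝ) ^ (q + p) * S q p
      = ∑ p ∈ Finset.range (n + 1), (-1 : ℝ) ^ (q + p) * S q p := by
    intro q hq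
    rw [Finset.mem_range] at hq
    rw [Finset.range_eq_Ico, Finset.range_eq_Ico]
    exact Finset.sum_Ico_consecutive (fun p => (-1 : ℝ) ^ (q + p) * S q p) (Nat.zero_le (q + 1)) (by omega : q + 1 ≤ n + 1)
  have := Finset.sum_congr rfl hsplit
  rw [Finset.sum_add_distrib] at this
  linarith [this]

/-- For every `n ≥ 0` and every `ψ : G^{n+1} → ℝ` (no invariance
assumed), the homotopy identity holds pointwise:
`s^{n+1}(σ,f)(δ^n ψ) + δ^{n−1}(s^n(σ,f)(ψ)) = C^n(σ)(ψ) − ρ^n_n(σ,f)(ψ)`,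
with the conventions `s^0(σ,f) = 0` and `δ^{−1} = 0`. -/
theorem homotopy_identity {Γ G X : Type*} [Group Γ] [Group G] [MulAction Γ X]
    (σ : Γ → X → G) (f : X → G) (n : ℕ) (ψ : (Fin (n + 1) → G) → ℝ)
    (γ : ℕ → Γ) (x : X) :
    sHomotopy σ f (n + 1) (coboundG n ψ) γ x +
        coboundCochain (n + 1) (sHomotopy σ f n ψ) γ x =
      pullCochain σ n ψ γ x - rhoTop σ f n ψ γ x := by
  classical
  set E : ℕ → ℕ → ℝ := fun i j => ψ fun k : Fin (n + 1) =>
    Ffun σ f γ x i (if (k : ℕ) < j then (k : ℕ) else (k : ℕ) + 1) with hE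
  set S : ℕ → ℕ → ℝ := fun q p =>
    sTerm σ f n q ψ (fun k => if k < p then γ k else γ (k + 1)) x with hS
  set W : ℕ → ℝ := fun m => ψ fun k : Fin (n + 1) =>
    if (k : ℕ) < m then (σ (γ (k : ℕ))⁻¹ x)⁻¹ * f ((γ (k : ℕ))⁻¹ • x)
    else (σ (γ (k : ℕ))⁻¹ x)⁻¹ with hW
  have h1 : ∀ i j, j < i → i ≤ n → E i j = S (i - 1) j := by
    intro i j hj hi
    have hk1 : ∀ k : Fin (n + 1), (k : ℕ) < n + 1 := fun k => k.isLt
    have ca : ∀ {u v : ℕ}, u = v → (σ (γ u)⁻¹ x)⁻¹ = (σ (γ v)⁻¹ x)⁻¹ :=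
      fun h => by rw [h]
    have cb : ∀ {u v : ℕ}, u = v →
        (σ (γ u)⁻¹ x)⁻¹ * f ((γ u)⁻¹ • x) = (σ (γ v)⁻¹ x)⁻¹ * f ((γ v)⁻¹ • x) :=
      fun h => by rw [h]
    simp only [hE, hS, sTerm, Ffun]
    congr 1
    funext k
    have hk := hk1 k
    split_ifs <;> first | rfl | omega | exact ca (by omega) | exact cb (by omega)
  have h2 : ∀ i j, i + 2 ≤ j → j ≤ n + 1 → E i j = S i (j - 1) := by
    intro i j hj hjn
    have hk1 : ∀ k : Fin (n + 1), (k : ℕ) < n + 1 := fun k => k.isLt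
    have ca : ∀ {u v : ℕ}, u = v → (σ (γ u)⁻¹ x)⁻¹ = (σ (γ v)⁻¹ x)⁻¹ :=
      fun h => by rw [h]
    have cb : ∀ {u v : ℕ}, u = v →
        (σ (γ u)⁻¹ x)⁻¹ * f ((γ u)⁻¹ • x) = (σ (γ v)⁻¹ x)⁻¹ * f ((γ v)⁻¹ • x) :=
      fun h => by rw [h]
    simp only [hE, hS, sTerm, Ffun]
    congr 1
    funext k
    have hk := hk1 k
    split_ifs <;> first | rfl | omega | exact ca (by omega) | exact cb (by omega)
  have h3 : ∀ i, i ≤ n → E i i = W i := by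
    intro i hi
    have ca : ∀ {u v : ℕ}, u = v → (σ (γ u)⁻¹ x)⁻¹ = (σ (γ v)⁻¹ x)⁻¹ :=
      fun h => by rw [h]
    have cb : ∀ {u v : ℕ}, u = v →
        (σ (γ u)⁻¹ x)⁻¹ * f ((γ u)⁻¹ • x) = (σ (γ v)⁻¹ x)⁻¹ * f ((γ v)⁻¹ • x) :=
      fun h => by rw [h]
    simp only [hE, hW, Ffun]
    congr 1
    funext k
    have hk := k.isLt
    split_ifs <;> first | rfl | omega | exact ca (by omega) | exact cb (by omega)
  have h4 : ∀ i, i ≤ n → E i (i + 1) = W (i + 1) := by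
    intro i hi
    have ca : ∀ {u v : ℕ}, u = v → (σ (γ u)⁻¹ x)⁻¹ = (σ (γ v)⁻¹ x)⁻¹ :=
      fun h => by rw [h]
    have cb : ∀ {u v : ℕ}, u = v →
        (σ (γ u)⁻¹ x)⁻¹ * f ((γ u)⁻¹ • x) = (σ (γ v)⁻¹ x)⁻¹ * f ((γ v)⁻¹ • x) :=
      fun h => by rw [h]
    simp only [hE, hW, Ffun]
    congr 1
    funext k
    have hk := k.isLt
    split_ifs <;> first | rfl | omega | exact ca (by omega) | exact cb (by omega)
  have hL1 : sHomotopy σ f (n + 1) (coboundG n ψ) γ x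
      = ∑ i ∈ Finset.range (n + 1), ∑ j ∈ Finset.range (n + 2),
          (-1 : ℝ) ^ (i + j) * E i j := by
    unfold sHomotopy
    refine Finset.sum_congr rfl fun i hi => ?_
    have hst : sTerm σ f (n + 1) i (coboundG n ψ) γ x
        = ∑ j ∈ Finset.range (n + 2), (-1 : ℝ) ^ j * E i j := by
      unfold sTerm coboundG
      rw [← Fin.sum_univ_eq_sum_range (fun j => (-1 : ℝ) ^ j * E i j) (n + 2)]
      refine Finset.sum_congr rfl fun jf _ => ?_
      congr 1
      simp only [hE]
      congr 1
      funext k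
      show Ffun σ f γ x i ((jf.succAbove k : Fin (n + 2)) : ℕ)
        = Ffun σ f γ x i (if (k : ℕ) < (jf : ℕ) then (k : ℕ) else (k : ℕ) + 1)
      rw [succAbove_coe_aux]
    rw [hst, Finset.mul_sum]
    refine Finset.sum_congr rfl fun j hj => ?_
    rw [pow_add]
    ring
  have hL2 : coboundCochain (n + 1) (sHomotopy σ f n ψ) γ x
      = ∑ q ∈ Finset.range n, ∑ p ∈ Finset.range (n + 1),
          (-1 : ℝ) ^ (q + p) * S q p := by
    unfold coboundCochain sHomotopy
    rw [← Finset.sum_comm]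
    refine Finset.sum_congr rfl fun p _ => ?_
    rw [Finset.mul_sum]
    refine Finset.sum_congr rfl fun q _ => ?_
    rw [hS, pow_add]
    ring
  have hpull : pullCochain σ n ψ γ x = W 0 := by
    simp [hW, pullCochain]
  have hrho : rhoTop σ f n ψ γ x = W (n + 1) := by
    simp [hW, rhoTop, Fin.is_lt, Fin.is_le]
  rw [hL1, hL2, hpull, hrho]
  exact abstract_homotopy n E S W h1 h2 h3 h4
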